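/- Let a1, a2, a3, λ > 0. Then ∫_0^∞ f_GE(z2; a2, λ) · ( ∫_0^{z2} f_GE(z1; a1, λ) · (1−e^{−λ z1})^{a3} dz1 ) dz2 = a1 a2 / ( (a1+a3)(a1+a2+a3) ). (For independent random variables Z1 ~ GE(a1, λ), Z2 ~ GE(a2, λ), Z3 ~ GE(a3, λ), this is P(Z3 < Z1 < Z2); it yields the E-step probability u1 = α1/(α1+α3) in the EM algorithm.) -/

import Mathlib

open Real Filter MeasureTheory intervalIntegral Topology

/-- The generalized exponential pdf `f_GE(x; α, λ) = α λ e^{-λx} (1-e^{-λx})^{α-1}`. -/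
noncomputable def fGE (x α lam : ℝ) : ℝ :=
  α * lam * Real.exp (-lam * x) * (1 - Real.exp (-lam * x)) ^ (α - 1)

lemma base_pos {lam x : ℝ} (hlam : 0 < lam) (hx : 0 < x) :
    0 < 1 - Real.exp (-lam * x) := by
  have : Real.exp (-lam * x) < 1 := by
    rw [Real.exp_lt_one_iff]
    nlinarith
  linarith

lemma base_nonneg {lam x : ℝ} (hlam : 0 < lam) (hx : 0 ≤ x) :
    0 ≤ 1 - Real.exp (-lam * x) := by
  have : Real.exp (-lam * x) ≤ 1 := by
    rw [Real.exp_le_one_iff]; nlinarith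
  linarith

/-- Antiderivative. -/
lemma hasDerivAt_G (b lam : ℝ) {x : ℝ} (hlam : 0 < lam) (hx : 0 < x) :
    HasDerivAt (fun y => (1 - Real.exp (-lam * y)) ^ b)
      (b * lam * Real.exp (-lam * x) * (1 - Real.exp (-lam * x)) ^ (b - 1)) x := by
  have h1 : HasDerivAt (fun y : ℝ => 1 - Real.exp (-lam * y))
      (lam * Real.exp (-lam * x)) x := by
    have := ((hasDerivAt_id x).const_mul (-lam)).exp
    have h := this.const_sub (1:ℝ)
    simpa [mul_comm, mul_assoc] using h
  have h2 := h1.rpow_const (p := b) (Or.inl (ne_of_gt (base_pos hlam hx)))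
  convert h2 using 1
  ring

lemma cont_G (b lam : ℝ) (hb : 0 ≤ b) :
    Continuous (fun y => (1 - Real.exp (-lam * y)) ^ b) := by
  refine Continuous.rpow_const ?_ (fun x => Or.inr hb)
  exact continuous_const.sub ((continuous_const.mul continuous_id).rexp)

/-- Key FTC lemma. -/
lemma key (b c lam t : ℝ) (hb : 0 < b) (hc : 0 ≤ c) (hlam : 0 < lam) (ht : 0 ≤ t) :
    ∫ x in (0:ℝ)..t, fGE x b lam * (1 - Real.exp (-lam * x)) ^ c
      = b / (b + c) * (1 - Real.exp (-lam * t)) ^ (b + c) := by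
  have hbc : 0 < b + c := by linarith
  set G : ℝ → ℝ := fun y => b / (b + c) * (1 - Real.exp (-lam * y)) ^ (b + c) with hG
  have hderiv : ∀ x ∈ Set.Ioo (0:ℝ) t, HasDerivAt G
      (fGE x b lam * (1 - Real.exp (-lam * x)) ^ c) x := by
    intro x hx
    have h := ((hasDerivAt_G (b + c) lam hlam hx.1).const_mul (b / (b + c)))
    refine h.congr_deriv ?_
    have hp := base_pos hlam hx.1
    rw [fGE]
    rw [show b + c - 1 = (b - 1) + c by ring, Real.rpow_add hp]
    field_simp
  have hpos : ∀ x ∈ Set.Ioo (0:ℝ) t,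
      0 ≤ fGE x b lam * (1 - Real.exp (-lam * x)) ^ c := by
    intro x hx
    have hp := (base_pos hlam hx.1).le
    have : 0 ≤ fGE x b lam := by
      rw [fGE]
      positivity
    positivity
  have hcontG : ContinuousOn G (Set.Icc 0 t) :=
    (continuous_const.mul (cont_G (b + c) lam hbc.le)).continuousOn
  have hint : IntervalIntegrable
      (fun x => fGE x b lam * (1 - Real.exp (-lam * x)) ^ c) volume 0 t := by
    rw [intervalIntegrable_iff_integrableOn_Ioc_of_le ht]
    exact intervalIntegral.integrableOn_deriv_of_nonneg hcontG hderiv hpos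
  rw [intervalIntegral.integral_eq_sub_of_hasDerivAt_of_le ht hcontG hderiv hint]
  have : G 0 = 0 := by
    simp [hG, Real.zero_rpow hbc.ne']
  rw [this, sub_zero]

lemma key_int (b c lam t : ℝ) (hb : 0 < b) (hc : 0 ≤ c) (hlam : 0 < lam) :
    IntegrableOn (fun x => fGE x b lam * (1 - Real.exp (-lam * x)) ^ c)
      (Set.Ioc 0 t) := by
  rcases le_or_gt t 0 with h | h
  · rw [Set.Ioc_eq_empty (by exact fun hlt => absurd hlt (not_lt.2 h))]
    exact integrableOn_empty
  have hbc : 0 < b + c := by linarith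
  have hcontG : ContinuousOn (fun y => b / (b + c) * (1 - Real.exp (-lam * y)) ^ (b + c))
      (Set.Icc 0 t) :=
    (continuous_const.mul (cont_G (b + c) lam hbc.le)).continuousOn
  have hderiv : ∀ x ∈ Set.Ioo (0:ℝ) t, HasDerivAt
      (fun y => b / (b + c) * (1 - Real.exp (-lam * y)) ^ (b + c))
      (fGE x b lam * (1 - Real.exp (-lam * x)) ^ c) x := by
    intro x hx
    have h := ((hasDerivAt_G (b + c) lam hlam hx.1).const_mul (b / (b + c)))
    refine h.congr_deriv ?_
    have hp := base_pos hlam hx.1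
    rw [fGE]
    rw [show b + c - 1 = (b - 1) + c by ring, Real.rpow_add hp]
    field_simp
  refine intervalIntegral.integrableOn_deriv_of_nonneg hcontG hderiv fun x hx => ?_
  have hp := (base_pos hlam hx.1).le
  have : 0 ≤ fGE x b lam := by rw [fGE]; positivity
  positivity

/-- For independent `Z1 ~ GE(a1,λ)`, `Z2 ~ GE(a2,λ)`, `Z3 ~ GE(a3,λ)`:
`P(Z3 < Z1 < Z2) = ∫_0^∞ f_GE(z2; a2, λ) (∫_0^{z2} f_GE(z1; a1, λ)(1-e^{-λ z1})^{a3} dz1) dz2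
  = a1 a2 / ((a1+a3)(a1+a2+a3))`. -/
theorem stmt_16 (a1 a2 a3 lam : ℝ) (ha1 : 0 < a1) (ha2 : 0 < a2) (ha3 : 0 < a3)
    (hlam : 0 < lam) :
    ∫ z2 in Set.Ioi (0 : ℝ),
        fGE z2 a2 lam *
          ∫ z1 in (0 : ℝ)..z2, fGE z1 a1 lam * (1 - Real.exp (-lam * z1)) ^ a3 =
      a1 * a2 / ((a1 + a3) * (a1 + a2 + a3)) := by
  have hspos : 0 < a1 + a3 := by linarith
  set g : ℝ → ℝ := fun z => fGE z a2 lam * (1 - Real.exp (-lam * z)) ^ (a1 + a3) with hg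
  have hgval : ∀ t : ℝ, 0 ≤ t →
      ∫ x in (0:ℝ)..t, g x = a2 / (a2 + (a1 + a3)) * (1 - Real.exp (-lam * t)) ^ (a2 + (a1 + a3)) :=
    fun t ht => key a2 (a1 + a3) lam t ha2 hspos.le hlam ht
  have hgnonneg : ∀ z : ℝ, 0 ≤ z → 0 ≤ g z := by
    intro z hz
    have hb := base_nonneg (lam := lam) (x := z) hlam hz
    have h1 : 0 ≤ fGE z a2 lam := by rw [fGE]; positivity
    positivity
  have hgint : ∀ t : ℝ, IntegrableOn g (Set.Ioc 0 t) :=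
    fun t => key_int a2 (a1 + a3) lam t ha2 hspos.le hlam
  have hlim : Tendsto (fun t : ℝ => ∫ x in (0:ℝ)..t, g x) atTop
      (𝓝 (a2 / (a2 + (a1 + a3)))) := by
    have h1 : Tendsto (fun t : ℝ => 1 - Real.exp (-lam * t)) atTop (𝓝 1) := by
      have : Tendsto (fun t : ℝ => -lam * t) atTop atBot :=
        Tendsto.const_mul_atTop_of_neg (by linarith) tendsto_id
      simpa using (Real.tendsto_exp_atBot.comp this).const_sub 1
    have h2 : Tendsto (fun t : ℝ => (1 - Real.exp (-lam * t)) ^ (a2 + (a1 + a3)))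
        atTop (𝓝 1) := by
      have := h1.rpow_const (p := a2 + (a1 + a3)) (Or.inl one_ne_zero)
      simpa using this
    have h3 : Tendsto
        (fun t : ℝ => a2 / (a2 + (a1 + a3)) * (1 - Real.exp (-lam * t)) ^ (a2 + (a1 + a3)))
        atTop (𝓝 (a2 / (a2 + (a1 + a3)))) := by
      simpa using h2.const_mul (a2 / (a2 + (a1 + a3)))
    refine h3.congr' ?_
    filter_upwards [eventually_ge_atTop (0:ℝ)] with t ht
    exact (hgval t ht).symm
  have hgIoi : IntegrableOn g (Set.Ioi (0:ℝ)) := by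
    refine integrableOn_Ioi_of_intervalIntegral_norm_tendsto (a2 / (a2 + (a1 + a3))) 0
      (fun t => hgint t) tendsto_id ?_
    refine hlim.congr' ?_
    filter_upwards [eventually_ge_atTop (0:ℝ)] with t ht
    refine intervalIntegral.integral_congr fun x hx => ?_
    rw [Set.uIcc_of_le ht] at hx
    exact (Real.norm_of_nonneg (hgnonneg x hx.1)).symm
  have hIoi : ∫ z in Set.Ioi (0:ℝ), g z = a2 / (a2 + (a1 + a3)) :=
    tendsto_nhds_unique (intervalIntegral_tendsto_integral_Ioi 0 hgIoi tendsto_id) hlim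
  have hmain : ∫ z2 in Set.Ioi (0 : ℝ),
        fGE z2 a2 lam *
          ∫ z1 in (0 : ℝ)..z2, fGE z1 a1 lam * (1 - Real.exp (-lam * z1)) ^ a3
      = ∫ z2 in Set.Ioi (0:ℝ), a1 / (a1 + a3) * g z2 := by
    refine setIntegral_congr_fun measurableSet_Ioi fun z2 hz2 => ?_
    rw [key a1 a3 lam z2 ha1 ha3.le hlam (le_of_lt hz2), hg]
    ring
  rw [hmain, MeasureTheory.integral_const_mul, hIoi]
  have h1 : a2 + (a1 + a3) ≠ 0 := by linarith
  have h2 : a1 + a3 ≠ 0 := hspos.ne'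
  have h3 : a1 + a2 + a3 ≠ 0 := by linarith
  field_simp
  ring
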